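/- Exponential-moment domination for supermodular functions: Let X_1,...,X_n be {0,1}-valued 1-negatively associated random variables and let X_1*,...,X_n* be mutually independent {0,1}-valued random variables with the same marginals. Then for every monotone non-decreasing supermodular g : {0,1}^n → ℝ and every λ > 0, E[exp(λ·g(X_1,...,X_n))] ≤ E[exp(λ·g(X_1*,...,X_n*))]. -/

import Mathlib

open MeasureTheory ProbabilityTheory Real Finset

/-- A vector is binary if each coordinate is 0 or 1. -/
def BinaryVec {m : ℕ} (x : Fin m → ℝ) : Prop := ∀ i, x i = 0 ∨ x i = 1

/-- Monotone non-decreasing on the Boolean cube. -/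
def MonoCube {m : ℕ} (f : (Fin m → ℝ) → ℝ) : Prop :=
  ∀ x y : Fin m → ℝ, BinaryVec x → BinaryVec y → x ≤ y → f x ≤ f y

/-- Submodular on the Boolean cube: marginal gains are coordinatewise non-increasing. -/
def SubmodCube {m : ℕ} (f : (Fin m → ℝ) → ℝ) : Prop :=
  ∀ (i : Fin m) (x y : Fin m → ℝ), BinaryVec x → BinaryVec y → x ≤ y →
    f (Function.update y i 1) - f (Function.update y i 0) ≤
      f (Function.update x i 1) - f (Function.update x i 0)

/-- Supermodular on the Boolean cube: marginal gains are coordinatewise non-decreasing. -/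
def SupermodCube {m : ℕ} (f : (Fin m → ℝ) → ℝ) : Prop :=
  ∀ (i : Fin m) (x y : Fin m → ℝ), BinaryVec x → BinaryVec y → x ≤ y →
    f (Function.update x i 1) - f (Function.update x i 0) ≤
      f (Function.update y i 1) - f (Function.update y i 0)

/-- 1-negative association for binary random variables: for every coordinate `i`,
every monotone `F` depending only on coordinates `≠ i` and every monotone `G` of `X i`,
`E[F·G] ≤ E[F]·E[G]`. -/
def OneNA {Ω : Type*} [MeasurableSpace Ω] (μ : Measure Ω) {m : ℕ} (X : Fin m → Ω → ℝ) : Prop :=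
  ∀ (i : Fin m) (F : (Fin m → ℝ) → ℝ) (G : ℝ → ℝ),
    Measurable F → MonoCube F →
    (∀ x y : Fin m → ℝ, (∀ j, j ≠ i → x j = y j) → F x = F y) →
    Measurable G → Monotone G →
    ∫ ω, F (fun j => X j ω) * G (X i ω) ∂μ ≤
      (∫ ω, F (fun j => X j ω) ∂μ) * ∫ ω, G (X i ω) ∂μ

/-! ### Auxiliary material -/

namespace ExpDom

variable {m : ℕ}

/-- Binary vector from a boolean vector. -/
def binOfBool (b : Fin m → Bool) : Fin m → ℝ := fun j => if b j then 1 else 0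

lemma binary_eq_binOfBool {x : Fin m → ℝ} (hx : BinaryVec x) :
    x = binOfBool (fun j => decide (x j = 1)) := by
  funext j
  rcases hx j with h | h <;> simp [binOfBool, h]

lemma binaryVec_update {x : Fin m → ℝ} (hx : BinaryVec x) (i : Fin m) {c : ℝ}
    (hc : c = 0 ∨ c = 1) : BinaryVec (Function.update x i c) := by
  intro j
  by_cases h : j = i
  · subst h; simpa using hc
  · simpa [Function.update_of_ne h] using hx j

lemma update_le_update {x y : Fin m → ℝ} (h : x ≤ y) (i : Fin m) (c : ℝ) :
    Function.update x i c ≤ Function.update y i c := by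
  intro j
  by_cases hj : j = i
  · subst hj; simp
  · simpa [Function.update_of_ne hj] using h j

/-- Every measurable function of a binary random vector is integrable. -/
lemma integrable_comp_binary {Ω : Type*} [MeasurableSpace Ω] {μ : Measure Ω}
    [IsFiniteMeasure μ] (f : (Fin m → ℝ) → ℝ) (hf : Measurable f)
    (X : Fin m → Ω → ℝ) (hX : ∀ i, Measurable (X i))
    (hbin : ∀ i ω, X i ω = 0 ∨ X i ω = 1) :
    Integrable (fun ω => f (fun j => X j ω)) μ := by
  have hmeas : Measurable fun ω => f (fun j => X j ω) :=
    hf.comp (measurable_pi_lambda _ hX)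
  have hne : (Finset.univ : Finset (Fin m → Bool)).Nonempty := Finset.univ_nonempty
  set C := Finset.univ.sup' hne (fun b => |f (binOfBool b)|) with hC
  refine Integrable.mono' (integrable_const C) hmeas.aestronglyMeasurable
    (Filter.Eventually.of_forall fun ω => ?_)
  have hbv : BinaryVec (fun j => X j ω) := fun j => hbin j ω
  have := binary_eq_binOfBool hbv
  rw [this]
  exact Finset.le_sup' (fun b => |f (binOfBool b)|) (Finset.mem_univ _)

/-- The averaging operator in coordinate `i` with parameter `p`. -/
noncomputable def Ai (p : ℝ) (i : Fin m) (f : (Fin m → ℝ) → ℝ) : (Fin m → ℝ) → ℝ :=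
  fun x => f (Function.update x i 0) +
    p * (f (Function.update x i 1) - f (Function.update x i 0))

lemma Ai_measurable {p : ℝ} {i : Fin m} {f : (Fin m → ℝ) → ℝ} (hf : Measurable f) :
    Measurable (Ai p i f) := by
  have h0 : Measurable fun x : Fin m → ℝ => f (Function.update x i 0) :=
    hf.comp measurable_update_left
  have h1 : Measurable fun x : Fin m → ℝ => f (Function.update x i 1) :=
    hf.comp measurable_update_left
  exact h0.add ((h1.sub h0).const_mul p)

lemma Ai_mono {p : ℝ} (hp0 : 0 ≤ p) (hp1 : p ≤ 1) {i : Fin m} {f : (Fin m → ℝ) → ℝ}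
    (hm : MonoCube f) : MonoCube (Ai p i f) := by
  intro x y hx hy hxy
  have b0x := binaryVec_update hx i (Or.inl rfl)
  have b1x := binaryVec_update hx i (Or.inr rfl)
  have b0y := binaryVec_update hy i (Or.inl rfl)
  have b1y := binaryVec_update hy i (Or.inr rfl)
  have h0 := hm _ _ b0x b0y (update_le_update hxy i 0)
  have h1 := hm _ _ b1x b1y (update_le_update hxy i 1)
  unfold Ai
  nlinarith

lemma Ai_supermod {p : ℝ} (hp0 : 0 ≤ p) (hp1 : p ≤ 1) {i : Fin m} {f : (Fin m → ℝ) → ℝ}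
    (hs : SupermodCube f) : SupermodCube (Ai p i f) := by
  intro j x y hx hy hxy
  by_cases hji : j = i
  · subst hji
    simp [Ai, Function.update_idem]
  · have hij : i ≠ j := fun h => hji h.symm
    have comm : ∀ (z : Fin m → ℝ) (c d : ℝ),
        Function.update (Function.update z j c) i d =
          Function.update (Function.update z i d) j c := by
      intro z c d
      exact Function.update_comm hji c d z
    have b0x := binaryVec_update hx i (Or.inl rfl)
    have b1x := binaryVec_update hx i (Or.inr rfl)
    have b0y := binaryVec_update hy i (Or.inl rfl)
    have b1y := binaryVec_update hy i (Or.inr rfl)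
    have h0 := hs j _ _ b0x b0y (update_le_update hxy i 0)
    have h1 := hs j _ _ b1x b1y (update_le_update hxy i 1)
    simp only [Ai, comm]
    nlinarith

/-- Keys facts about `exp (l * g)`. -/
lemma exp_diff_le {l a0 a1 b0 b1 : ℝ} (hl : 0 < l) (ha : a0 ≤ a1)
    (hab : a1 - a0 ≤ b1 - b0) (h0 : a0 ≤ b0) :
    Real.exp (l * a1) - Real.exp (l * a0) ≤ Real.exp (l * b1) - Real.exp (l * b0) := by
  have e1 : Real.exp (l * a1) - Real.exp (l * a0)
      = Real.exp (l * a0) * (Real.exp (l * (a1 - a0)) - 1) := by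
    rw [mul_sub, ← Real.exp_add, mul_one]
    congr 2
    ring
  have e2 : Real.exp (l * b1) - Real.exp (l * b0)
      = Real.exp (l * b0) * (Real.exp (l * (b1 - b0)) - 1) := by
    rw [mul_sub, ← Real.exp_add, mul_one]
    congr 2
    ring
  rw [e1, e2]
  have h1 : Real.exp (l * a0) ≤ Real.exp (l * b0) :=
    Real.exp_le_exp.2 (by nlinarith)
  have h2 : Real.exp (l * (a1 - a0)) - 1 ≤ Real.exp (l * (b1 - b0)) - 1 :=
    sub_le_sub_right (Real.exp_le_exp.2 (by nlinarith)) 1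
  have h3 : (0:ℝ) ≤ Real.exp (l * (a1 - a0)) - 1 := by
    have : (1:ℝ) ≤ Real.exp (l * (a1 - a0)) :=
      Real.one_le_exp (by nlinarith)
    linarith
  exact mul_le_mul h1 h2 h3 (Real.exp_pos _).le

lemma exp_monoCube {g : (Fin m → ℝ) → ℝ} (hm : MonoCube g) {l : ℝ} (hl : 0 < l) :
    MonoCube fun x => Real.exp (l * g x) := by
  intro x y hx hy hxy
  exact Real.exp_le_exp.2 (mul_le_mul_of_nonneg_left (hm x y hx hy hxy) hl.le)

lemma exp_supermodCube {g : (Fin m → ℝ) → ℝ} (hm : MonoCube g) (hs : SupermodCube g)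
    {l : ℝ} (hl : 0 < l) : SupermodCube fun x => Real.exp (l * g x) := by
  intro i x y hx hy hxy
  have b0x := binaryVec_update hx i (Or.inl rfl)
  have b1x := binaryVec_update hx i (Or.inr rfl)
  have b0y := binaryVec_update hy i (Or.inl rfl)
  have b1y := binaryVec_update hy i (Or.inr rfl)
  refine exp_diff_le hl ?_ ?_ ?_
  · refine hm _ _ b0x b1x ?_
    intro j
    by_cases hj : j = i
    · subst hj; simp
    · simp [Function.update_of_ne hj]
  · exact hs i x y hx hy hxy
  · exact hm _ _ b0x b0y (update_le_update hxy i 0)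

/-- Pointwise decomposition of a function of a binary vector along coordinate `i`. -/
lemma binary_decomp {f : (Fin m → ℝ) → ℝ} {v : Fin m → ℝ} (hv : BinaryVec v) (i : Fin m) :
    f v = f (Function.update v i 0) +
      v i * (f (Function.update v i 1) - f (Function.update v i 0)) := by
  rcases hv i with h | h
  · have : Function.update v i 0 = v := by rw [← h, Function.update_eq_self]
    rw [this, h]; ring
  · have : Function.update v i 1 = v := by rw [← h, Function.update_eq_self]
    rw [this, h]; ring


section Steps

variable {Ω : Type*} [MeasurableSpace Ω] {μ : Measure Ω} [IsProbabilityMeasure μ]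

/-- The 1-NA single-coordinate replacement inequality. -/
lemma na_step (X : Fin m → Ω → ℝ) (hX : ∀ i, Measurable (X i))
    (hbin : ∀ i ω, X i ω = 0 ∨ X i ω = 1) (hNA : OneNA μ X) (i : Fin m)
    (f : (Fin m → ℝ) → ℝ) (hf : Measurable f) (hmono : MonoCube f) (hsup : SupermodCube f) :
    ∫ ω, f (fun j => X j ω) ∂μ ≤
      ∫ ω, Ai (∫ ω, X i ω ∂μ) i f (fun j => X j ω) ∂μ := by
  set p : ℝ := ∫ ω, X i ω ∂μ with hp
  set f0 : (Fin m → ℝ) → ℝ := fun x => f (Function.update x i 0) with hf0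
  set fd : (Fin m → ℝ) → ℝ :=
    fun x => f (Function.update x i 1) - f (Function.update x i 0) with hfd
  have hf0m : Measurable f0 := hf.comp measurable_update_left
  have hfdm : Measurable fd := (hf.comp measurable_update_left).sub (hf.comp measurable_update_left)
  have hXv : ∀ ω, BinaryVec (fun j => X j ω) := fun ω j => hbin j ω
  -- decomposition
  have hdecomp : ∀ ω, f (fun j => X j ω) =
      f0 (fun j => X j ω) + fd (fun j => X j ω) * X i ω := by
    intro ω
    have := binary_decomp (f := f) (hXv ω) i
    simp only [hf0, hfd]
    rw [this]; ring
  have hint0 : Integrable (fun ω => f0 (fun j => X j ω)) μ :=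
    integrable_comp_binary f0 hf0m X hX hbin
  have hintd : Integrable (fun ω => fd (fun j => X j ω) * X i ω) μ := by
    have : Measurable fun x : Fin m → ℝ => fd x * x i := hfdm.mul (measurable_pi_apply i)
    exact integrable_comp_binary _ this X hX hbin
  have hintfd : Integrable (fun ω => fd (fun j => X j ω)) μ :=
    integrable_comp_binary fd hfdm X hX hbin
  have hsplit : ∫ ω, f (fun j => X j ω) ∂μ =
      (∫ ω, f0 (fun j => X j ω) ∂μ) + ∫ ω, fd (fun j => X j ω) * X i ω ∂μ := by
    rw [← integral_add hint0 hintd]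
    exact integral_congr_ae (Filter.Eventually.of_forall hdecomp)
  -- NA inequality
  have hFmono : MonoCube fd := fun x y hx hy hxy => hsup i x y hx hy hxy
  have hFdep : ∀ x y : Fin m → ℝ, (∀ j, j ≠ i → x j = y j) → fd x = fd y := by
    intro x y h
    have h1 : Function.update x i 1 = Function.update y i 1 := by
      funext j
      by_cases hj : j = i
      · subst hj; simp
      · simp [Function.update_of_ne hj, h j hj]
    have h0 : Function.update x i 0 = Function.update y i 0 := by
      funext j
      by_cases hj : j = i
      · subst hj; simp
      · simp [Function.update_of_ne hj, h j hj]
    simp [hfd, h0, h1]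
  have hNAi := hNA i fd (fun t => t) hfdm hFmono hFdep measurable_id monotone_id
  have hle : ∫ ω, fd (fun j => X j ω) * X i ω ∂μ ≤
      (∫ ω, fd (fun j => X j ω) ∂μ) * p := hNAi
  -- rewrite target
  have htarget : ∫ ω, Ai p i f (fun j => X j ω) ∂μ =
      (∫ ω, f0 (fun j => X j ω) ∂μ) + (∫ ω, fd (fun j => X j ω) ∂μ) * p := by
    have : ∀ ω, Ai p i f (fun j => X j ω) =
        f0 (fun j => X j ω) + p * fd (fun j => X j ω) := fun ω => rfl
    rw [integral_congr_ae (Filter.Eventually.of_forall this),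
      integral_add hint0 (hintfd.const_mul p), integral_const_mul]
    ring
  rw [hsplit, htarget]
  linarith

/-- The independence single-coordinate replacement identity. -/
lemma indep_step (Xs : Fin m → Ω → ℝ) (hXs : ∀ i, Measurable (Xs i))
    (hbin : ∀ i ω, Xs i ω = 0 ∨ Xs i ω = 1)
    (hindep : iIndepFun Xs μ) (i : Fin m) {p : ℝ}
    (hp : (∫ ω, Xs i ω ∂μ) = p)
    (f : (Fin m → ℝ) → ℝ) (hf : Measurable f) :
    ∫ ω, f (fun j => Xs j ω) ∂μ = ∫ ω, Ai p i f (fun j => Xs j ω) ∂μ := by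
  set f0 : (Fin m → ℝ) → ℝ := fun x => f (Function.update x i 0) with hf0
  set fd : (Fin m → ℝ) → ℝ :=
    fun x => f (Function.update x i 1) - f (Function.update x i 0) with hfd
  have hf0m : Measurable f0 := hf.comp measurable_update_left
  have hfdm : Measurable fd := (hf.comp measurable_update_left).sub (hf.comp measurable_update_left)
  have hXv : ∀ ω, BinaryVec (fun j => Xs j ω) := fun ω j => hbin j ω
  have hdecomp : ∀ ω, f (fun j => Xs j ω) =
      f0 (fun j => Xs j ω) + fd (fun j => Xs j ω) * Xs i ω := by
    intro ω
    have := binary_decomp (f := f) (hXv ω) i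
    simp only [hf0, hfd]
    rw [this]; ring
  have hint0 : Integrable (fun ω => f0 (fun j => Xs j ω)) μ :=
    integrable_comp_binary f0 hf0m Xs hXs hbin
  have hintd : Integrable (fun ω => fd (fun j => Xs j ω) * Xs i ω) μ := by
    have : Measurable fun x : Fin m → ℝ => fd x * x i := hfdm.mul (measurable_pi_apply i)
    exact integrable_comp_binary _ this Xs hXs hbin
  have hintfd : Integrable (fun ω => fd (fun j => Xs j ω)) μ :=
    integrable_comp_binary fd hfdm Xs hXs hbin
  have hintXi : Integrable (Xs i) μ := by
    have : Measurable fun x : Fin m → ℝ => x i := measurable_pi_apply i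
    exact integrable_comp_binary _ this Xs hXs hbin
  have hsplit : ∫ ω, f (fun j => Xs j ω) ∂μ =
      (∫ ω, f0 (fun j => Xs j ω) ∂μ) + ∫ ω, fd (fun j => Xs j ω) * Xs i ω ∂μ := by
    rw [← integral_add hint0 hintd]
    exact integral_congr_ae (Filter.Eventually.of_forall hdecomp)
  -- independence: fd (Xs ·) is a function of coordinates ≠ i
  have hFdep : ∀ x y : Fin m → ℝ, (∀ j, j ≠ i → x j = y j) → fd x = fd y := by
    intro x y h
    have h1 : Function.update x i 1 = Function.update y i 1 := by
      funext j
      by_cases hj : j = i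
      · subst hj; simp
      · simp [Function.update_of_ne hj, h j hj]
    have h0 : Function.update x i 0 = Function.update y i 0 := by
      funext j
      by_cases hj : j = i
      · subst hj; simp
      · simp [Function.update_of_ne hj, h j hj]
    simp [hfd, h0, h1]
  set S : Finset (Fin m) := Finset.univ.erase i with hS
  have hdisj : Disjoint S ({i} : Finset (Fin m)) := by
    simp [hS, Finset.disjoint_singleton_right]
  have hIF := (hindep.indepFun_finset S {i} hdisj hXs)
  set φ : ({x // x ∈ S} → ℝ) → ℝ :=
    fun v => fd (fun j => if h : j ∈ S then v ⟨j, h⟩ else 0) with hφ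
  set ψ : ({x // x ∈ ({i} : Finset (Fin m))} → ℝ) → ℝ :=
    fun v => v ⟨i, Finset.mem_singleton_self i⟩ with hψ
  have hφm : Measurable φ := by
    apply hfdm.comp
    apply measurable_pi_lambda
    intro j
    by_cases hj : j ∈ S
    · simpa [hj] using measurable_pi_apply (⟨j, hj⟩ : {x // x ∈ S})
    · simpa [hj] using (measurable_const : Measurable fun _ : ({x // x ∈ S} → ℝ) => (0:ℝ))
  have hψm : Measurable ψ := measurable_pi_apply _
  have hIF2 : IndepFun (fun ω => fd (fun j => Xs j ω)) (Xs i) μ := by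
    have := hIF.comp hφm hψm
    have heq1 : (φ ∘ fun a (j : {x // x ∈ S}) => Xs j a) =
        fun ω => fd (fun j => Xs j ω) := by
      funext ω
      apply hFdep
      intro j hj
      have hjS : j ∈ S := by simp [hS, hj]
      simp [hjS]
    have heq2 : (ψ ∘ fun a (j : {x // x ∈ ({i} : Finset (Fin m))}) => Xs j a) = Xs i := by
      funext ω; rfl
    rwa [heq1, heq2] at this
  have hmul := hIF2.integral_mul_eq_mul_integral hintfd.aestronglyMeasurable hintXi.aestronglyMeasurable
  have htarget : ∫ ω, Ai p i f (fun j => Xs j ω) ∂μ =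
      (∫ ω, f0 (fun j => Xs j ω) ∂μ) + (∫ ω, fd (fun j => Xs j ω) ∂μ) * p := by
    have : ∀ ω, Ai p i f (fun j => Xs j ω) =
        f0 (fun j => Xs j ω) + p * fd (fun j => Xs j ω) := fun ω => rfl
    rw [integral_congr_ae (Filter.Eventually.of_forall this),
      integral_add hint0 (hintfd.const_mul p), integral_const_mul]
    ring
  rw [hsplit, htarget, ← hp]
  have hmul' : ∫ ω, fd (fun j => Xs j ω) * Xs i ω ∂μ =
      (∫ ω, fd (fun j => Xs j ω) ∂μ) * ∫ ω, Xs i ω ∂μ := by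
    simpa [Pi.mul_apply] using hmul
  rw [hmul']


/-- `f` depends only on the coordinates in the list `L`. -/
def DependsOnL (f : (Fin m → ℝ) → ℝ) (L : List (Fin m)) : Prop :=
  ∀ x y : Fin m → ℝ, (∀ j ∈ L, x j = y j) → f x = f y

lemma Ai_depends {p : ℝ} {i : Fin m} {f : (Fin m → ℝ) → ℝ} {L : List (Fin m)}
    (h : DependsOnL f (i :: L)) : DependsOnL (Ai p i f) L := by
  intro x y hxy
  have key : ∀ c : ℝ, f (Function.update x i c) = f (Function.update y i c) := by
    intro c
    apply h
    intro j hj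
    by_cases hji : j = i
    · subst hji; simp
    · have hjL : j ∈ L := by
        rcases List.mem_cons.1 hj with h' | h'
        · exact absurd h' hji
        · exact h'
      simp [Function.update_of_ne hji, hxy j hjL]
  simp [Ai, key 0, key 1]

lemma foldA_const (p : Fin m → ℝ) :
    ∀ (L : List (Fin m)) (f : (Fin m → ℝ) → ℝ), DependsOnL f L →
      ∀ x y, (L.foldl (fun h i => Ai (p i) i h) f) x = (L.foldl (fun h i => Ai (p i) i h) f) y
  | [], f, hdep, x, y => hdep x y (by simp)
  | i :: L, f, hdep, x, y => by
    rw [List.foldl_cons]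
    exact foldA_const p L (Ai (p i) i f) (Ai_depends hdep) x y

lemma chainX (X : Fin m → Ω → ℝ) (hX : ∀ i, Measurable (X i))
    (hbin : ∀ i ω, X i ω = 0 ∨ X i ω = 1) (hNA : OneNA μ X) (p : Fin m → ℝ)
    (hpX : ∀ i, (∫ ω, X i ω ∂μ) = p i) (hp0 : ∀ i, 0 ≤ p i) (hp1 : ∀ i, p i ≤ 1)
    (L : List (Fin m)) :
    ∀ (f : (Fin m → ℝ) → ℝ), Measurable f → MonoCube f → SupermodCube f →
      ∫ ω, f (fun j => X j ω) ∂μ ≤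
        ∫ ω, (L.foldl (fun h i => Ai (p i) i h) f) (fun j => X j ω) ∂μ := by
  induction L with
  | nil => intro f _ _ _; simp
  | cons i L ih =>
    intro f hf hm hs
    have step := na_step X hX hbin hNA i f hf hm hs
    rw [hpX i] at step
    have step2 := ih (Ai (p i) i f) (Ai_measurable hf)
      (Ai_mono (hp0 i) (hp1 i) hm) (Ai_supermod (hp0 i) (hp1 i) hs)
    rw [List.foldl_cons]
    exact step.trans step2

lemma chainXs (Xs : Fin m → Ω → ℝ) (hXs : ∀ i, Measurable (Xs i))
    (hbin : ∀ i ω, Xs i ω = 0 ∨ Xs i ω = 1)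
    (hindep : iIndepFun Xs μ) (p : Fin m → ℝ)
    (hpXs : ∀ i, (∫ ω, Xs i ω ∂μ) = p i) (L : List (Fin m)) :
    ∀ (f : (Fin m → ℝ) → ℝ), Measurable f → DependsOnL f L → ∀ z,
      ∫ ω, f (fun j => Xs j ω) ∂μ = (L.foldl (fun h i => Ai (p i) i h) f) z := by
  induction L with
  | nil =>
    intro f _ hdep z
    have : ∀ ω, f (fun j => Xs j ω) = f z := fun ω => hdep _ z (by simp)
    rw [integral_congr_ae (Filter.Eventually.of_forall this)]
    simp
  | cons i L ih =>
    intro f hf hdep z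
    rw [List.foldl_cons, indep_step Xs hXs hbin hindep i (hpXs i) f hf]
    exact ih (Ai (p i) i f) (Ai_measurable hf) (Ai_depends hdep) z

end Steps

end ExpDom


/-- Exponential-moment domination for supermodular functions under 1-negative association. -/
theorem exp_moment_domination_supermodular {Ω : Type*} [MeasurableSpace Ω] (μ : Measure Ω)
    [IsProbabilityMeasure μ] {n : ℕ} (X Xstar : Fin n → Ω → ℝ)
    (hX : ∀ i, Measurable (X i)) (hbin : ∀ i ω, X i ω = 0 ∨ X i ω = 1)
    (hNA : OneNA μ X)
    (hXstar : ∀ i, Measurable (Xstar i)) (hbinstar : ∀ i ω, Xstar i ω = 0 ∨ Xstar i ω = 1)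
    (hindep : iIndepFun Xstar μ)
    (hmarg : ∀ i, Measure.map (Xstar i) μ = Measure.map (X i) μ) :
    ∀ (g : (Fin n → ℝ) → ℝ), Measurable g → MonoCube g → SupermodCube g →
      ∀ l : ℝ, 0 < l →
        ∫ ω, Real.exp (l * g (fun j => X j ω)) ∂μ ≤
          ∫ ω, Real.exp (l * g (fun j => Xstar j ω)) ∂μ := by
  intro g hg hmono hsup l hl
  classical
  set Φ : (Fin n → ℝ) → ℝ := fun x => Real.exp (l * g x) with hΦ
  have hΦm : Measurable Φ := Real.measurable_exp.comp (hg.const_mul l)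
  have hΦmono : MonoCube Φ := ExpDom.exp_monoCube hmono hl
  have hΦsup : SupermodCube Φ := ExpDom.exp_supermodCube hmono hsup hl
  set p : Fin n → ℝ := fun i => ∫ ω, X i ω ∂μ with hp
  have hpX : ∀ i, (∫ ω, X i ω ∂μ) = p i := fun i => rfl
  have hp0 : ∀ i, 0 ≤ p i := by
    intro i
    apply integral_nonneg
    intro ω
    rcases hbin i ω with h | h <;> simp [h]
  have hp1 : ∀ i, p i ≤ 1 := by
    intro i
    have hint : Integrable (X i) μ := by
      have : Measurable fun x : Fin n → ℝ => x i := measurable_pi_apply i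
      exact ExpDom.integrable_comp_binary _ this X hX hbin
    have hle : ∀ ω, X i ω ≤ 1 := by
      intro ω; rcases hbin i ω with h | h <;> simp [h]
    calc (∫ ω, X i ω ∂μ) ≤ ∫ _, (1:ℝ) ∂μ :=
          integral_mono hint (integrable_const 1) hle
      _ = 1 := by simp
  have hpXs : ∀ i, (∫ ω, Xstar i ω ∂μ) = p i := by
    intro i
    have h1 : (∫ ω, Xstar i ω ∂μ) = ∫ x, id x ∂(Measure.map (Xstar i) μ) :=
      (integral_map (hXstar i).aemeasurable aestronglyMeasurable_id).symm
    have h2 : (∫ x, id x ∂(Measure.map (X i) μ)) = ∫ ω, X i ω ∂μ :=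
      integral_map (hX i).aemeasurable aestronglyMeasurable_id
    rw [h1, hmarg i, h2]
  set L : List (Fin n) := List.finRange n with hL
  have hdep : ExpDom.DependsOnL Φ L := by
    intro x y h
    have hxy : x = y := funext fun j => h j (List.mem_finRange j)
    rw [hxy]
  set F : (Fin n → ℝ) → ℝ := L.foldl (fun h i => ExpDom.Ai (p i) i h) Φ with hF
  set z0 : Fin n → ℝ := fun _ => 0 with hz0
  have h1 : ∫ ω, Φ (fun j => X j ω) ∂μ ≤ ∫ ω, F (fun j => X j ω) ∂μ :=
    ExpDom.chainX X hX hbin hNA p hpX hp0 hp1 L Φ hΦm hΦmono hΦsup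
  have hFconst : ∀ ω, F (fun j => X j ω) = F z0 := fun ω =>
    ExpDom.foldA_const p L Φ hdep _ z0
  have h2 : ∫ ω, F (fun j => X j ω) ∂μ = F z0 := by
    rw [integral_congr_ae (Filter.Eventually.of_forall hFconst)]
    simp
  have h3 : ∫ ω, Φ (fun j => Xstar j ω) ∂μ = F z0 :=
    ExpDom.chainXs Xstar hXstar hbinstar hindep p hpXs L Φ hΦm hdep z0
  calc ∫ ω, Real.exp (l * g (fun j => X j ω)) ∂μ
      = ∫ ω, Φ (fun j => X j ω) ∂μ := rfl
    _ ≤ ∫ ω, F (fun j => X j ω) ∂μ := h1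
    _ = F z0 := h2
    _ = ∫ ω, Φ (fun j => Xstar j ω) ∂μ := h3.symm
    _ = ∫ ω, Real.exp (l * g (fun j => Xstar j ω)) ∂μ := rfl
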